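/- arXiv:1908.03993 — 2 statements merged into one kernel-verified Lean document; each statement's English description precedes it below -/
import Mathlib

section
/- Under the standing assumptions, if u_λ ∈ N_λ achieves m_λ = inf_{N_λ} J_λ, then u_λ is a critical point of J_λ: J_λ'(u_λ)φ = 0 for every φ ∈ E_λ. Hence u_λ is a ground state solution of Δ²u − Δu + (λa+1)u = |u|^{p−2}u on V. -/
open Filter Topology

structure GraphData (V : Type*) where
  ω : V → V → ℝ
  μ : V → ℝ
  sym : ∀ x y, ω x y = ω y x
  nonneg : ∀ x y, 0 ≤ ω x y
  loopless : ∀ x, ω x x = 0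
  locfin : ∀ x, {y | ω x y ≠ 0}.Finite
  μpos : ∀ x, 0 < μ x

variable {V : Type*}

noncomputable def GraphData.lap (g : GraphData V) (u : V → ℝ) (x : V) : ℝ :=
  (1 / g.μ x) * ∑' y, g.ω x y * (u y - u x)

noncomputable def GraphData.grad (g : GraphData V) (u v : V → ℝ) (x : V) : ℝ :=
  (1 / (2 * g.μ x)) * ∑' y, g.ω x y * (u y - u x) * (v y - v x)

noncomputable def GraphData.integral (g : GraphData V) (f : V → ℝ) : ℝ :=
  ∑' x, g.μ x * f x

def GraphData.G (g : GraphData V) : SimpleGraph V where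
  Adj x y := 0 < g.ω x y
  symm := ⟨fun x y (h : 0 < g.ω x y) => show 0 < g.ω y x by rwa [g.sym y x]⟩
  loopless := ⟨fun x (h : 0 < g.ω x x) => by simp [g.loopless x] at h⟩

noncomputable def GraphData.enormSq (g : GraphData V) (a : V → ℝ) (lam : ℝ) (u : V → ℝ) : ℝ :=
  ∑' x, g.μ x * ((g.lap u x) ^ 2 + g.grad u u x + (lam * a x + 1) * (u x) ^ 2)

def GraphData.memE (g : GraphData V) (a : V → ℝ) (lam : ℝ) (u : V → ℝ) : Prop :=
  Summable fun x => g.μ x * ((g.lap u x) ^ 2 + g.grad u u x + (lam * a x + 1) * (u x) ^ 2)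

noncomputable def GraphData.lpInt (g : GraphData V) (p : ℝ) (u : V → ℝ) : ℝ :=
  ∑' x, g.μ x * |u x| ^ p

noncomputable def GraphData.Jlam (g : GraphData V) (a : V → ℝ) (lam p : ℝ) (u : V → ℝ) : ℝ :=
  (1 / 2) * g.enormSq a lam u - (1 / p) * g.lpInt p u

def GraphData.Nehari (g : GraphData V) (a : V → ℝ) (lam p : ℝ) : Set (V → ℝ) :=
  {u | u ≠ 0 ∧ g.memE a lam u ∧ g.enormSq a lam u = g.lpInt p u}

noncomputable def GraphData.Jderiv (g : GraphData V) (a : V → ℝ) (lam p : ℝ) (u φ : V → ℝ) : ℝ :=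
  (∑' x, g.μ x * (g.lap u x * g.lap φ x + g.grad u φ x + (lam * a x + 1) * u x * φ x))
    - ∑' x, g.μ x * (|u x| ^ (p - 2) * u x * φ x)

def GraphData.bdry (g : GraphData V) (Ω : Set V) : Set V :=
  {y | y ∉ Ω ∧ ∃ x ∈ Ω, 0 < g.ω x y}

noncomputable def GraphData.hnormSq (g : GraphData V) (Ω : Set V) (u : V → ℝ) : ℝ :=
  (∑' x : ↥(Ω ∪ g.bdry Ω), g.μ x * ((g.lap u x) ^ 2 + g.grad u u x))
    + ∑' x : Ω, g.μ x * (u x) ^ 2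

noncomputable def GraphData.lpIntO (g : GraphData V) (Ω : Set V) (p : ℝ) (u : V → ℝ) : ℝ :=
  ∑' x : Ω, g.μ x * |u x| ^ p

noncomputable def GraphData.JOmega (g : GraphData V) (Ω : Set V) (p : ℝ) (u : V → ℝ) : ℝ :=
  (1 / 2) * g.hnormSq Ω u - (1 / p) * g.lpIntO Ω p u

def GraphData.memH (g : GraphData V) (Ω : Set V) (u : V → ℝ) : Prop :=
  ∀ x ∉ Ω, u x = 0

def GraphData.NehariO (g : GraphData V) (Ω : Set V) (p : ℝ) : Set (V → ℝ) :=
  {u | u ≠ 0 ∧ g.memH Ω u ∧ g.hnormSq Ω u = g.lpIntO Ω p u}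

noncomputable def GraphData.JderivO (g : GraphData V) (Ω : Set V) (p : ℝ) (u φ : V → ℝ) : ℝ :=
  (∑' x : ↥(Ω ∪ g.bdry Ω), g.μ x * (g.lap u x * g.lap φ x + g.grad u φ x))
    + (∑' x : Ω, g.μ x * (u x * φ x))
    - ∑' x : Ω, g.μ x * (|u x| ^ (p - 2) * u x * φ x)

/-! ### Auxiliary machinery -/

namespace GraphData

variable (g : GraphData V)

lemma summand_summable {x : V} {F : V → ℝ} (hF : ∀ y, g.ω x y = 0 → F y = 0) :
    Summable F := by
  apply summable_of_ne_finset_zero (s := (g.locfin x).toFinset)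
  intro y hy
  refine hF y ?_
  by_contra h
  exact hy ((g.locfin x).mem_toFinset.2 h)

lemma lap_comb (u v : V → ℝ) (s : ℝ) (x : V) :
    g.lap (fun z => u z + s * v z) x = g.lap u x + s * g.lap v x := by
  unfold GraphData.lap
  have h1 : Summable fun y => g.ω x y * (u y - u x) :=
    g.summand_summable (x := x) (fun y hy => by simp [hy])
  have h2 : Summable fun y => g.ω x y * (v y - v x) :=
    g.summand_summable (x := x) (fun y hy => by simp [hy])
  have e : ∀ y, g.ω x y * ((fun z => u z + s * v z) y - (fun z => u z + s * v z) x)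
      = g.ω x y * (u y - u x) + s * (g.ω x y * (v y - v x)) := by
    intro y; show g.ω x y * ((u y + s * v y) - (u x + s * v x)) = _; ring
  rw [tsum_congr e, Summable.tsum_add h1 (h2.mul_left s), tsum_mul_left]
  ring

lemma grad_comb (u v : V → ℝ) (s : ℝ) (x : V) :
    g.grad (fun z => u z + s * v z) (fun z => u z + s * v z) x
      = g.grad u u x + 2 * s * g.grad u v x + s ^ 2 * g.grad v v x := by
  unfold GraphData.grad
  have h1 : Summable fun y => g.ω x y * (u y - u x) * (u y - u x) :=
    g.summand_summable (x := x) (fun y hy => by simp [hy])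
  have h2 : Summable fun y => g.ω x y * (u y - u x) * (v y - v x) :=
    g.summand_summable (x := x) (fun y hy => by simp [hy])
  have h3 : Summable fun y => g.ω x y * (v y - v x) * (v y - v x) :=
    g.summand_summable (x := x) (fun y hy => by simp [hy])
  have e : ∀ y, g.ω x y * ((fun z => u z + s * v z) y - (fun z => u z + s * v z) x)
        * ((fun z => u z + s * v z) y - (fun z => u z + s * v z) x)
      = g.ω x y * (u y - u x) * (u y - u x)
        + ((2 * s) * (g.ω x y * (u y - u x) * (v y - v x))
          + s ^ 2 * (g.ω x y * (v y - v x) * (v y - v x))) := by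
    intro y
    show g.ω x y * ((u y + s * v y) - (u x + s * v x)) * ((u y + s * v y) - (u x + s * v x)) = _
    ring
  rw [tsum_congr e, Summable.tsum_add h1 ((h2.mul_left _).add (h3.mul_left _)),
    Summable.tsum_add (h2.mul_left _) (h3.mul_left _), tsum_mul_left, tsum_mul_left]
  ring

lemma lap_smul (c : ℝ) (u : V → ℝ) (x : V) :
    g.lap (fun z => c * u z) x = c * g.lap u x := by
  unfold GraphData.lap
  have e : ∀ y, g.ω x y * ((fun z => c * u z) y - (fun z => c * u z) x)
      = c * (g.ω x y * (u y - u x)) := by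
    intro y; show g.ω x y * ((c * u y) - (c * u x)) = _; ring
  rw [tsum_congr e, tsum_mul_left]
  ring

lemma grad_smul (c : ℝ) (u : V → ℝ) (x : V) :
    g.grad (fun z => c * u z) (fun z => c * u z) x = c ^ 2 * g.grad u u x := by
  unfold GraphData.grad
  have e : ∀ y, g.ω x y * ((fun z => c * u z) y - (fun z => c * u z) x)
        * ((fun z => c * u z) y - (fun z => c * u z) x)
      = c ^ 2 * (g.ω x y * (u y - u x) * (u y - u x)) := by
    intro y; show g.ω x y * ((c * u y) - (c * u x)) * ((c * u y) - (c * u x)) = _; ring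
  rw [tsum_congr e, tsum_mul_left]
  ring

lemma grad_self_nonneg (u : V → ℝ) (x : V) : 0 ≤ g.grad u u x := by
  unfold GraphData.grad
  have h1 : (0:ℝ) < 1 / (2 * g.μ x) := by
    have := g.μpos x; positivity
  refine mul_nonneg h1.le (tsum_nonneg fun y => ?_)
  have : g.ω x y * (u y - u x) * (u y - u x) = g.ω x y * (u y - u x) ^ 2 := by ring
  rw [this]
  exact mul_nonneg (g.nonneg x y) (sq_nonneg _)

/-- The bilinear integrand of the quadratic form. -/
noncomputable def bil (a : V → ℝ) (lam : ℝ) (u v : V → ℝ) (x : V) : ℝ :=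
  g.μ x * (g.lap u x * g.lap v x + g.grad u v x + (lam * a x + 1) * u x * v x)

lemma bil_self_eq (a : V → ℝ) (lam : ℝ) (u : V → ℝ) :
    (fun x => g.μ x * ((g.lap u x) ^ 2 + g.grad u u x + (lam * a x + 1) * (u x) ^ 2))
      = g.bil a lam u u := by
  funext x; unfold GraphData.bil; ring

lemma bil_comb (a : V → ℝ) (lam : ℝ) (u v : V → ℝ) (s : ℝ) (x : V) :
    g.bil a lam (fun z => u z + s * v z) (fun z => u z + s * v z) x
      = g.bil a lam u u x + 2 * s * g.bil a lam u v x + s ^ 2 * g.bil a lam v v x := by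
  unfold GraphData.bil
  rw [g.lap_comb u v s x, g.grad_comb u v s x]
  ring

lemma bil_smul (a : V → ℝ) (lam : ℝ) (c : ℝ) (u : V → ℝ) (x : V) :
    g.bil a lam (fun z => c * u z) (fun z => c * u z) x = c ^ 2 * g.bil a lam u u x := by
  unfold GraphData.bil
  rw [g.lap_smul c u x, g.grad_smul c u x]
  ring

lemma bil_self_nonneg {a : V → ℝ} {lam : ℝ} (hlam : 0 ≤ lam) (ha : ∀ x, 0 ≤ a x)
    (u : V → ℝ) (x : V) : 0 ≤ g.bil a lam u u x := by
  unfold GraphData.bil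
  have h1 : 0 ≤ g.lap u x * g.lap u x := mul_self_nonneg _
  have h2 := g.grad_self_nonneg u x
  have h3 : 0 ≤ lam * a x := mul_nonneg hlam (ha x)
  have h4 : 0 ≤ (lam * a x + 1) * u x * u x := by nlinarith [mul_self_nonneg (u x)]
  have := (g.μpos x).le
  nlinarith

lemma mu_sq_le_bil {a : V → ℝ} {lam : ℝ} (hlam : 0 ≤ lam) (ha : ∀ x, 0 ≤ a x)
    (u : V → ℝ) (x : V) : g.μ x * u x ^ 2 ≤ g.bil a lam u u x := by
  unfold GraphData.bil
  have h1 : 0 ≤ g.lap u x * g.lap u x := mul_self_nonneg _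
  have h2 := g.grad_self_nonneg u x
  have h3 : 0 ≤ lam * a x := mul_nonneg hlam (ha x)
  have := (g.μpos x).le
  nlinarith [mul_self_nonneg (u x), mul_nonneg (mul_nonneg this h3) (mul_self_nonneg (u x))]

end GraphData


set_option maxHeartbeats 1000000 in
/-- a minimizer on the Nehari manifold is a critical point of J_λ. -/
theorem stmt9 (g : GraphData V) (μmin C lam p : ℝ) (hμmin : 0 < μmin)
    (hμ : ∀ x, μmin ≤ g.μ x) (hω : ∀ x, ∑' y, g.ω x y ≤ C) (hconn : g.G.Connected)
    (a : V → ℝ) (ha : ∀ x, 0 ≤ a x) (hlam : 1 < lam) (hp : 2 < p)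
    (u : V → ℝ) (hN : u ∈ g.Nehari a lam p)
    (hmin : ∀ v ∈ g.Nehari a lam p, g.Jlam a lam p u ≤ g.Jlam a lam p v) :
    ∀ φ, g.memE a lam φ → g.Jderiv a lam p u φ = 0 := by
  intro φ hφE
  have hp0 : (0:ℝ) < p := by linarith
  have hp2pos : (0:ℝ) < p - 2 := by linarith
  have hp2ne : p - 2 ≠ 0 := ne_of_gt hp2pos
  have hlam0 : (0:ℝ) ≤ lam := by linarith
  obtain ⟨hu0, huE, huN⟩ := hN
  -- summability of the bilinear integrands
  have huu : Summable (g.bil a lam u u) := by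
    have h' : Summable (fun x => g.μ x * ((g.lap u x) ^ 2 + g.grad u u x
        + (lam * a x + 1) * (u x) ^ 2)) := huE
    exact h'.congr fun x => by unfold GraphData.bil; ring
  have hφφ : Summable (g.bil a lam φ φ) := by
    have h' : Summable (fun x => g.μ x * ((g.lap φ x) ^ 2 + g.grad φ φ x
        + (lam * a x + 1) * (φ x) ^ 2)) := hφE
    exact h'.congr fun x => by unfold GraphData.bil; ring
  have hw1 : Summable (g.bil a lam (fun z => u z + 1 * φ z) (fun z => u z + 1 * φ z)) := by
    refine Summable.of_nonneg_of_le (fun x => g.bil_self_nonneg hlam0 ha _ x)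
      (fun x => ?_) ((huu.mul_left 2).add (hφφ.mul_left 2))
    have h1 := g.bil_comb a lam u φ 1 x
    have h2 := g.bil_comb a lam u φ (-1) x
    have h3 := g.bil_self_nonneg hlam0 ha (fun z => u z + (-1) * φ z) x
    nlinarith [h1, h2, h3]
  have huφ : Summable (g.bil a lam u φ) := by
    refine (((hw1.sub huu).sub hφφ).div_const 2).congr fun x => ?_
    have h1 := g.bil_comb a lam u φ 1 x
    nlinarith [h1]
  -- the basic sums
  set Suu := ∑' x, g.bil a lam u u x with hSuu_def
  set Suφ := ∑' x, g.bil a lam u φ x with hSuφ_def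
  set Sφφ := ∑' x, g.bil a lam φ φ x with hSφφ_def
  set T := ∑' x, g.μ x * (|u x| ^ (p - 2) * u x * φ x) with hT_def
  have henu : g.enormSq a lam u = Suu := by
    unfold GraphData.enormSq
    exact tsum_congr fun x => by unfold GraphData.bil; ring
  -- positivity of Suu
  have hμu2 : Summable (fun x => g.μ x * u x ^ 2) :=
    Summable.of_nonneg_of_le (fun x => mul_nonneg (g.μpos x).le (sq_nonneg _))
      (fun x => g.mu_sq_le_bil hlam0 ha u x) huu
  have hμφ2 : Summable (fun x => g.μ x * φ x ^ 2) :=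
    Summable.of_nonneg_of_le (fun x => mul_nonneg (g.μpos x).le (sq_nonneg _))
      (fun x => g.mu_sq_le_bil hlam0 ha φ x) hφφ
  have hNpos : 0 < Suu := by
    obtain ⟨x0, hx0⟩ : ∃ x, u x ≠ 0 := by
      by_contra h; push_neg at h; exact hu0 (funext h)
    have h1 := g.mu_sq_le_bil hlam0 ha u x0
    have h2 : g.bil a lam u u x0 ≤ Suu :=
      Summable.le_tsum huu x0 fun y _ => g.bil_self_nonneg hlam0 ha u y
    have h3 : 0 < u x0 ^ 2 := lt_of_le_of_ne (sq_nonneg _) (Ne.symm (pow_ne_zero 2 hx0))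
    nlinarith [g.μpos x0]
  have hNne : Suu ≠ 0 := ne_of_gt hNpos
  -- the uniform bound M
  have bdd : ∀ v : V → ℝ, Summable (g.bil a lam v v) →
      ∀ x, |v x| ≤ Real.sqrt ((∑' y, g.bil a lam v v y) / μmin) := by
    intro v hv x
    have h1 := g.mu_sq_le_bil hlam0 ha v x
    have h2 : g.bil a lam v v x ≤ ∑' y, g.bil a lam v v y :=
      Summable.le_tsum hv x fun y _ => g.bil_self_nonneg hlam0 ha v y
    have h4 := hμ x
    have h5 : v x ^ 2 ≤ (∑' y, g.bil a lam v v y) / μmin := by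
      rw [le_div_iff₀ hμmin]
      nlinarith [sq_nonneg (v x)]
    calc |v x| = Real.sqrt (v x ^ 2) := (Real.sqrt_sq_eq_abs _).symm
      _ ≤ _ := Real.sqrt_le_sqrt h5
  set M : ℝ := Real.sqrt (Suu / μmin) + Real.sqrt (Sφφ / μmin) with hM_def
  have hM : ∀ x, |u x| + |φ x| ≤ M := fun x =>
    add_le_add (bdd u huu x) (bdd φ hφφ x)
  have hM0 : (0:ℝ) ≤ M := by
    rw [hM_def]; positivity
  have hCM0 : (0:ℝ) ≤ M ^ (p - 2) := Real.rpow_nonneg hM0 _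
  -- the functions A and B
  set Af : ℝ → ℝ := fun s => Suu + 2 * s * Suφ + s ^ 2 * Sφφ with hAf_def
  set Bf : ℝ → ℝ := fun s => ∑' x, g.μ x * |u x + s * φ x| ^ p with hBf_def
  have hwsum : ∀ s : ℝ,
      Summable (g.bil a lam (fun z => u z + s * φ z) (fun z => u z + s * φ z)) := by
    intro s
    refine (huu.add ((huφ.mul_left (2 * s)).add (hφφ.mul_left (s ^ 2)))).congr fun x => ?_
    rw [g.bil_comb a lam u φ s x]; ring
  have hAfval : ∀ s : ℝ,
      (∑' x, g.bil a lam (fun z => u z + s * φ z) (fun z => u z + s * φ z) x) = Af s := by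
    intro s
    have hsum2 : Summable fun x => 2 * s * g.bil a lam u φ x := huφ.mul_left _
    have hsum3 : Summable fun x => s ^ 2 * g.bil a lam φ φ x := hφφ.mul_left _
    calc (∑' x, g.bil a lam (fun z => u z + s * φ z) (fun z => u z + s * φ z) x)
        = ∑' x, (g.bil a lam u u x + (2 * s * g.bil a lam u φ x
            + s ^ 2 * g.bil a lam φ φ x)) :=
          tsum_congr fun x => by rw [g.bil_comb a lam u φ s x]; ring
      _ = Af s := by
          rw [Summable.tsum_add huu (hsum2.add hsum3), Summable.tsum_add hsum2 hsum3, tsum_mul_left,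
            tsum_mul_left, hAf_def]
          ring
  -- derivative of Af at 0
  have hAderiv : HasDerivAt Af (2 * Suφ) 0 := by
    have h1 : HasDerivAt (fun s : ℝ => 2 * s * Suφ) (2 * Suφ) 0 := by
      simpa using ((hasDerivAt_id (0:ℝ)).const_mul 2).mul_const Suφ
    have h2 : HasDerivAt (fun s : ℝ => s ^ 2 * Sφφ) 0 0 := by
      simpa using (hasDerivAt_pow 2 (0:ℝ)).mul_const Sφφ
    have h3 := (h1.const_add Suu).add h2
    rw [add_zero] at h3
    exact h3
  have hA0 : Af 0 = Suu := by simp [hAf_def]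
  -- termwise derivative of Bf
  have hterm : ∀ (x : V) (s : ℝ),
      HasDerivAt (fun s : ℝ => g.μ x * |u x + s * φ x| ^ p)
        (g.μ x * (p * |u x + s * φ x| ^ (p - 2) * (u x + s * φ x) * φ x)) s := by
    intro x s
    have h1 : HasDerivAt (fun s : ℝ => u x + s * φ x) (φ x) s := by
      simpa using ((hasDerivAt_id s).mul_const (φ x)).const_add (u x)
    have h2 := (hasDerivAt_abs_rpow (u x + s * φ x) (show (1:ℝ) < p by linarith)).comp s h1
    have h3 := h2.const_mul (g.μ x)
    simp only [Function.comp] at h3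
    convert h3 using 1
  -- summable bound on derivatives on the unit ball
  set bnd : V → ℝ := fun x => p * M ^ (p - 2) * (2 * (g.μ x * u x ^ 2)
      + 2 * (g.μ x * φ x ^ 2)) with hbnd_def
  have hbndsum : Summable bnd := ((hμu2.mul_left 2).add (hμφ2.mul_left 2)).mul_left _
  have habs2 : ∀ x : V, (|u x| + |φ x|) * (|u x| + |φ x|) ≤ 2 * u x ^ 2 + 2 * φ x ^ 2 := by
    intro x
    nlinarith [sq_abs (u x), sq_abs (φ x), sq_nonneg (|u x| - |φ x|)]
  have hg' : ∀ (x : V) (s : ℝ), s ∈ Metric.ball (0:ℝ) 1 →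
      ‖g.μ x * (p * |u x + s * φ x| ^ (p - 2) * (u x + s * φ x) * φ x)‖ ≤ bnd x := by
    intro x s hs
    have hs1 : |s| ≤ 1 := by
      have := Metric.mem_ball.mp hs
      rw [Real.dist_eq, sub_zero] at this
      linarith
    have hw2 : |u x + s * φ x| ≤ |u x| + |φ x| := by
      calc |u x + s * φ x| ≤ |u x| + |s * φ x| := abs_add_le _ _
        _ ≤ |u x| + |φ x| := by
            rw [abs_mul]; nlinarith [abs_nonneg (φ x)]
    have hw : |u x + s * φ x| ≤ M := hw2.trans (hM x)
    have hwp : |u x + s * φ x| ^ (p - 2) ≤ M ^ (p - 2) :=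
      Real.rpow_le_rpow (abs_nonneg _) hw hp2pos.le
    have hc0 : (0:ℝ) ≤ |u x + s * φ x| ^ (p - 2) := Real.rpow_nonneg (abs_nonneg _) _
    have hμx := (g.μpos x).le
    rw [Real.norm_eq_abs, abs_mul, abs_of_nonneg hμx, abs_mul, abs_mul, abs_mul,
      abs_of_nonneg hp0.le, abs_of_nonneg hc0]
    have e1 : |u x + s * φ x| ^ (p - 2) * |u x + s * φ x| * |φ x|
        ≤ M ^ (p - 2) * ((|u x| + |φ x|) * (|u x| + |φ x|)) := by
      have t1 : |u x + s * φ x| ^ (p - 2) * |u x + s * φ x|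
          ≤ M ^ (p - 2) * (|u x| + |φ x|) :=
        mul_le_mul hwp hw2 (abs_nonneg _) hCM0
      have t2 : |φ x| ≤ |u x| + |φ x| := le_add_of_nonneg_left (abs_nonneg _)
      calc |u x + s * φ x| ^ (p - 2) * |u x + s * φ x| * |φ x|
          ≤ (M ^ (p - 2) * (|u x| + |φ x|)) * (|u x| + |φ x|) :=
            mul_le_mul t1 t2 (abs_nonneg _)
              (mul_nonneg hCM0 (by positivity))
        _ = M ^ (p - 2) * ((|u x| + |φ x|) * (|u x| + |φ x|)) := by ring
    have e3 : |u x + s * φ x| ^ (p - 2) * |u x + s * φ x| * |φ x|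
        ≤ M ^ (p - 2) * (2 * u x ^ 2 + 2 * φ x ^ 2) :=
      e1.trans (mul_le_mul_of_nonneg_left (habs2 x) hCM0)
    have e4 := mul_le_mul_of_nonneg_left e3 (mul_nonneg hμx hp0.le)
    simp only [hbnd_def]
    nlinarith [e4]
  -- summability of Bf at 0
  have habsp : ∀ x : V, g.μ x * |u x| ^ p ≤ M ^ (p - 2) * (g.μ x * u x ^ 2) := by
    intro x
    have h1 : |u x| ^ p = |u x| ^ (p - 2) * u x ^ 2 := by
      have h := Real.rpow_add' (abs_nonneg (u x)) (show (p - 2) + 2 ≠ 0 by linarith)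
      rw [show p - 2 + 2 = p by ring] at h
      rw [h, Real.rpow_two, sq_abs]
    have h2 : |u x| ^ (p - 2) ≤ M ^ (p - 2) :=
      Real.rpow_le_rpow (abs_nonneg _) (le_trans (le_add_of_nonneg_right (abs_nonneg _)) (hM x)) hp2pos.le
    have hμx := (g.μpos x).le
    rw [h1]
    have h3 : g.μ x * (|u x| ^ (p - 2) * u x ^ 2) ≤ g.μ x * (M ^ (p - 2) * u x ^ 2) :=
      mul_le_mul_of_nonneg_left (mul_le_mul_of_nonneg_right h2 (sq_nonneg _)) hμx
    nlinarith [h3]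
  have hB0sum : Summable (fun x => g.μ x * |u x + (0:ℝ) * φ x| ^ p) := by
    refine Summable.of_nonneg_of_le
      (fun x => mul_nonneg (g.μpos x).le (Real.rpow_nonneg (abs_nonneg _) _))
      (fun x => ?_) (hμu2.mul_left (M ^ (p - 2)))
    simpa using habsp x
  -- derivative of Bf at 0
  have hBderiv0 : HasDerivAt Bf
      (∑' x, g.μ x * (p * |u x + (0:ℝ) * φ x| ^ (p - 2) * (u x + (0:ℝ) * φ x) * φ x)) 0 := by
    exact hasDerivAt_tsum_of_isPreconnected hbndsum Metric.isOpen_ball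
      (convex_ball (0:ℝ) 1).isPreconnected (fun x y _ => hterm x y)
      (fun x y hy => hg' x y hy) (Metric.mem_ball_self one_pos) hB0sum
      (Metric.mem_ball_self one_pos)
  have hBT : (∑' x, g.μ x * (p * |u x + (0:ℝ) * φ x| ^ (p - 2) * (u x + (0:ℝ) * φ x) * φ x))
      = p * T := by
    rw [hT_def, ← tsum_mul_left]
    exact tsum_congr fun x => by simp; ring
  rw [hBT] at hBderiv0
  have hB0 : Bf 0 = Suu := by
    have e : Bf 0 = g.lpInt p u := by
      rw [hBf_def]; unfold GraphData.lpInt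
      exact tsum_congr fun x => by norm_num
    rw [e, ← huN, henu]
  have hBfne : Bf 0 ≠ 0 := by rw [hB0]; exact hNne
  -- eventual positivity
  have hevB : ∀ᶠ s in 𝓝 (0:ℝ), 0 < Bf s :=
    hBderiv0.continuousAt.eventually (eventually_gt_nhds (by rw [hB0]; exact hNpos))
  have hevA : ∀ᶠ s in 𝓝 (0:ℝ), 0 < Af s :=
    hAderiv.continuousAt.eventually (eventually_gt_nhds (by rw [hA0]; exact hNpos))
  -- the comparison function ψ
  set q : ℝ := 2 / (p - 2) with hq_def
  set ψ : ℝ → ℝ := fun s => (Af s / Bf s) ^ q * Af s with hψ_def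
  have hψ0 : ψ 0 = Suu := by
    rw [hψ_def]; simp only []
    rw [hA0, hB0, div_self hNne, Real.one_rpow, one_mul]
  -- key inequality : eventually Suu ≤ ψ s
  have hkey : ∀ᶠ s in 𝓝 (0:ℝ), Suu ≤ ψ s := by
    filter_upwards [hevA, hevB] with s hAs hBs
    have hr : 0 < Af s / Bf s := div_pos hAs hBs
    set t : ℝ := (Af s / Bf s) ^ ((1:ℝ) / (p - 2)) with ht_def
    have ht : 0 < t := Real.rpow_pos_of_pos hr _
    have htp2 : t ^ (p - 2) = Af s / Bf s := by
      rw [ht_def, ← Real.rpow_mul hr.le]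
      rw [show (1:ℝ) / (p - 2) * (p - 2) = 1 by field_simp]
      exact Real.rpow_one _
    have ht2 : (t : ℝ) ^ (2:ℕ) = (Af s / Bf s) ^ q := by
      rw [ht_def, ← Real.rpow_natCast ((Af s / Bf s) ^ ((1:ℝ)/(p-2))) 2,
        ← Real.rpow_mul hr.le, hq_def]
      congr 1
      push_cast; ring
    have htp : t ^ p = t ^ (2:ℕ) * t ^ (p - 2) := by
      rw [← Real.rpow_natCast t 2, ← Real.rpow_add ht]
      congr 1
      push_cast; ring
    -- the projected function
    set v : V → ℝ := fun z => t * (u z + s * φ z) with hv_def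
    have hbilv : ∀ x, g.bil a lam v v x
        = t ^ (2:ℕ) * g.bil a lam (fun z => u z + s * φ z) (fun z => u z + s * φ z) x :=
      fun x => g.bil_smul a lam t (fun z => u z + s * φ z) x
    have henv : g.enormSq a lam v = t ^ (2:ℕ) * Af s := by
      unfold GraphData.enormSq
      calc (∑' x, g.μ x * ((g.lap v x) ^ 2 + g.grad v v x + (lam * a x + 1) * (v x) ^ 2))
          = ∑' x, t ^ (2:ℕ) * g.bil a lam (fun z => u z + s * φ z)
              (fun z => u z + s * φ z) x :=
            tsum_congr fun x => by rw [← hbilv x]; unfold GraphData.bil; ring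
        _ = t ^ (2:ℕ) * Af s := by rw [tsum_mul_left, hAfval s]
    have hmemEv : g.memE a lam v := by
      have h1 : Summable (fun x => t ^ (2:ℕ) * g.bil a lam (fun z => u z + s * φ z)
          (fun z => u z + s * φ z) x) := (hwsum s).mul_left _
      exact (h1.congr fun x => by rw [← hbilv x]; unfold GraphData.bil; ring)
    have hlpv : g.lpInt p v = t ^ p * Bf s := by
      unfold GraphData.lpInt
      calc (∑' x, g.μ x * |v x| ^ p)
          = ∑' x, t ^ p * (g.μ x * |u x + s * φ x| ^ p) := by
            refine tsum_congr fun x => ?_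
            rw [hv_def]
            simp only []
            rw [abs_mul, abs_of_pos ht, Real.mul_rpow ht.le (abs_nonneg _)]
            ring
        _ = t ^ p * Bf s := by rw [tsum_mul_left, hBf_def]
    have hcond : g.enormSq a lam v = g.lpInt p v := by
      rw [henv, hlpv, htp, htp2]
      field_simp
    have hvne : v ≠ 0 := by
      intro hv0
      have hz : ∀ z, u z + s * φ z = 0 := by
        intro z
        have := congrFun hv0 z
        rw [hv_def] at this
        simp only [Pi.zero_apply] at this
        rcases mul_eq_zero.mp this with h | h
        · exact absurd h ht.ne'
        · exact h
      have : Bf s = 0 := by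
        rw [hBf_def]
        simp only []
        calc (∑' x, g.μ x * |u x + s * φ x| ^ p) = ∑' (x : V), (0:ℝ) :=
            tsum_congr fun x => by
              rw [hz x, abs_zero, Real.zero_rpow hp0.ne', mul_zero]
          _ = 0 := tsum_zero
      linarith
    have hvN : v ∈ g.Nehari a lam p := ⟨hvne, hmemEv, hcond⟩
    have hJ := hmin v hvN
    unfold GraphData.Jlam at hJ
    rw [henu, henv, hlpv, huN.symm.trans henu] at hJ
    · have e : t ^ p * Bf s = t ^ (2:ℕ) * Af s := by
        rw [htp, htp2]; field_simp
      rw [e] at hJ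
      have hc : (0:ℝ) < 1/2 - 1/p := by
        rw [sub_pos, div_lt_div_iff₀ hp0 (by norm_num : (0:ℝ) < 2)]
        linarith
      have h4 : (1/2 - 1/p) * Suu ≤ (1/2 - 1/p) * (t ^ (2:ℕ) * Af s) := by linarith [hJ]
      have h5 : Suu ≤ t ^ (2:ℕ) * Af s := (mul_le_mul_iff_right₀ hc).mp h4
      rw [hψ_def]
      simp only []
      rw [← ht2]
      exact h5
  have hlocmin : IsLocalMin ψ 0 := by
    have h : ∀ᶠ s in 𝓝 (0:ℝ), ψ 0 ≤ ψ s := by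
      filter_upwards [hkey] with s hs
      rw [hψ0]; exact hs
    exact h
  -- derivative of ψ at 0
  have hdiv : HasDerivAt (fun s => Af s / Bf s)
      ((2 * Suφ * Bf 0 - Af 0 * (p * T)) / Bf 0 ^ 2) 0 := hAderiv.div hBderiv0 hBfne
  have hrp : HasDerivAt (fun y : ℝ => y ^ q) (q * (Af 0 / Bf 0) ^ (q - 1)) (Af 0 / Bf 0) :=
    Real.hasDerivAt_rpow_const (Or.inl (by rw [hA0, hB0, div_self hNne]; norm_num))
  have hcomp := hrp.comp (0:ℝ) hdiv
  have hψd := hcomp.mul hAderiv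
  have hzero : q * (Af 0 / Bf 0) ^ (q - 1) * ((2 * Suφ * Bf 0 - Af 0 * (p * T)) / Bf 0 ^ 2)
      * Af 0 + (fun s => ((fun y : ℝ => y ^ q) ∘ fun s => Af s / Bf s) s) 0 * (2 * Suφ) = 0 := by
    refine hlocmin.hasDerivAt_eq_zero ?_
    have : ψ = fun s => ((fun y : ℝ => y ^ q) ∘ fun s => Af s / Bf s) s * Af s := by
      funext s; simp [hψ_def, Function.comp]
    rw [this]
    exact hψd
  simp only [Function.comp, hA0, hB0, div_self hNne, Real.one_rpow, one_mul] at hzero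
  -- extract Suφ = T
  have hfin : Suφ = T := by
    rw [hq_def] at hzero
    field_simp at hzero
    have h2 : Suu ^ 2 * (2 * p) * (Suφ - T) = 0 := by linear_combination Suu ^ 2 * hzero
    have h3 : Suu ^ 2 * (2 * p) ≠ 0 :=
      mul_ne_zero (pow_ne_zero 2 hNne) (mul_pos two_pos hp0).ne'
    exact sub_eq_zero.mp ((mul_eq_zero.mp h2).resolve_left h3)
  -- conclude
  have hJd : g.Jderiv a lam p u φ = Suφ - T := rfl
  rw [hJd, hfin, sub_self]
end

section
/- On a connected locally finite graph G=(V,E) with μ(x) ≥ μ_min > 0 and Σ_{y∼x}ω_{xy} ≤ C for all x, the space C_c(V) of finitely supported functions is dense in W^{1,2}(V): for every u with ∫_V(|∇u|² + u²)dμ < ∞ and every ε > 0 there exists a finitely supported v with ∫_V(|∇(u−v)|² + (u−v)²)dμ < ε. Moreover the cut-off approximants can be taken as v = u·η_k where η_k is the piecewise-linear cutoff equal to 1 on the ball of radius k, 0 outside the ball of radius 2k. -/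
open Filter Topology

variable {V : Type*}

/-- The piecewise-linear radial cutoff η_k at scales k and 2k around x₀. -/
noncomputable def GraphData.cutoff (g : GraphData V) (x₀ : V) (k : ℕ) (x : V) : ℝ :=
  if g.G.dist x x₀ ≤ k then 1
  else if g.G.dist x x₀ < 2 * k then ((2 * k : ℝ) - g.G.dist x x₀) / k
  else 0

lemma GraphData.ball_finite (g : GraphData V) (hconn : g.G.Connected) (x₀ : V) :
    ∀ n : ℕ, {x : V | g.G.dist x x₀ ≤ n}.Finite := by
  intro n
  induction n with
  | zero =>
    refine Set.Finite.subset (Set.finite_singleton x₀) ?_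
    intro x hx
    simp only [Set.mem_setOf_eq, Nat.le_zero] at hx
    exact (hconn.dist_eq_zero_iff.mp hx)
  | succ n ih =>
    refine Set.Finite.subset ((ih.union (ih.biUnion (t := fun y => {z | 0 < g.ω y z}) (fun y _ => ?_)))) ?_
    · exact Set.Finite.subset (g.locfin y) (fun z hz => ne_of_gt hz)
    · intro x hx
      simp only [Set.mem_setOf_eq] at hx
      rcases le_or_gt (g.G.dist x x₀) n with h | h
      · exact Or.inl h
      · have hd : g.G.dist x x₀ = n + 1 := le_antisymm hx h
        obtain ⟨p, hp⟩ := (hconn x x₀).exists_walk_length_eq_dist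
        rw [hd] at hp
        cases p with
        | nil => simp at hp
        | cons hadj q =>
          refine Or.inr ?_
          rename_i b
          refine Set.mem_biUnion (x := b) ?_ hadj.symm
          simp only [Set.mem_setOf_eq]
          calc g.G.dist b x₀ ≤ q.length := SimpleGraph.dist_le q
            _ = n := by simpa using hp

lemma GraphData.cutoff_nonneg (g : GraphData V) (x₀ : V) (k : ℕ) (x : V) :
    0 ≤ g.cutoff x₀ k x := by
  unfold GraphData.cutoff
  split_ifs with h1 h2
  · norm_num
  · push_neg at h1
    apply div_nonneg
    · have : (g.G.dist x x₀ : ℝ) < 2 * k := by exact_mod_cast h2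
      linarith
    · positivity
  · exact le_refl _

lemma GraphData.cutoff_le_one (g : GraphData V) (x₀ : V) (k : ℕ) (x : V) :
    g.cutoff x₀ k x ≤ 1 := by
  unfold GraphData.cutoff
  split_ifs with h1 h2
  · exact le_refl _
  · push_neg at h1
    have hk : (0:ℝ) < k := by
      have : 0 < k := by omega
      exact_mod_cast this
    rw [div_le_one hk]
    have : (k:ℝ) < g.G.dist x x₀ := by exact_mod_cast h1
    linarith
  · norm_num

lemma GraphData.cutoff_eq_one (g : GraphData V) (x₀ : V) (k : ℕ) (x : V)
    (h : g.G.dist x x₀ ≤ k) : g.cutoff x₀ k x = 1 := if_pos h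

lemma GraphData.cutoff_eq_zero (g : GraphData V) (x₀ : V) (k : ℕ) (x : V)
    (h : 2 * k < g.G.dist x x₀) : g.cutoff x₀ k x = 0 := by
  unfold GraphData.cutoff
  rw [if_neg (by omega), if_neg (by omega)]

lemma GraphData.tsum_nbhd (g : GraphData V) (x : V) (f : V → ℝ)
    (hf : ∀ y, g.ω x y = 0 → f y = 0) :
    ∑' y, f y = ∑ y ∈ (g.locfin x).toFinset, f y := by
  refine tsum_eq_sum fun y hy => hf y ?_
  simpa [Set.Finite.mem_toFinset, not_not] using hy

lemma GraphData.grad_eq (g : GraphData V) (a b : V → ℝ) (x : V) :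
    g.grad a b x = (1 / (2 * g.μ x)) * ∑ y ∈ (g.locfin x).toFinset,
      g.ω x y * (a y - a x) * (b y - b x) := by
  unfold GraphData.grad
  rw [g.tsum_nbhd x _ (fun y h => by simp [h])]

lemma GraphData.grad_self_nonneg_s16 (g : GraphData V) (a : V → ℝ) (x : V) :
    0 ≤ g.grad a a x := by
  rw [g.grad_eq]
  apply mul_nonneg
  · have := g.μpos x; positivity
  · exact Finset.sum_nonneg fun y _ => by
      have := g.nonneg x y
      nlinarith [sq_nonneg (a y - a x)]

lemma GraphData.sum_ω_le (g : GraphData V) {C : ℝ} (hω : ∀ x, ∑' y, g.ω x y ≤ C) (x : V) :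
    ∑ y ∈ (g.locfin x).toFinset, g.ω x y ≤ C := by
  rw [← g.tsum_nbhd x _ (fun y h => h)]
  exact hω x

lemma key_ineq (a b s t : ℝ) (hs0 : 0 ≤ s) (hs1 : s ≤ 1) (ht0 : 0 ≤ t) (ht1 : t ≤ 1) :
    ((a * s - a) - (b * t - b)) * ((a * s - a) - (b * t - b))
      ≤ 2 * ((a - b) * (a - b)) + 2 * (b * b) := by
  nlinarith [sq_nonneg ((s-1)*(a-b) - b*(s-t)), sq_nonneg (a-b), sq_nonneg b,
    mul_nonneg (mul_nonneg (sub_nonneg.2 hs1) (sub_nonneg.2 hs1)) (sq_nonneg (a-b)),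
    mul_nonneg (by nlinarith : (0:ℝ) ≤ 1 - (s-1)^2) (sq_nonneg (a-b)),
    mul_nonneg (by nlinarith : (0:ℝ) ≤ 1 - (s-t)^2) (sq_nonneg b)]

lemma GraphData.grad_cutoff_bound (g : GraphData V) {C : ℝ} (hω : ∀ x, ∑' y, g.ω x y ≤ C)
    (u h : V → ℝ) (hh0 : ∀ y, 0 ≤ h y) (hh1 : ∀ y, h y ≤ 1) (x : V) :
    g.μ x * g.grad (fun y => u y * h y - u y) (fun y => u y * h y - u y) x
      ≤ 2 * (g.μ x * g.grad u u x) + C * (u x * u x) := by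
  have hμx := g.μpos x
  have hne : g.μ x ≠ 0 := ne_of_gt hμx
  rw [g.grad_eq, g.grad_eq]
  have hP : ∀ S : ℝ, g.μ x * (1 / (2 * g.μ x) * S) = S / 2 := by
    intro S; field_simp
  rw [hP, hP]
  have hW : ∑ y ∈ (g.locfin x).toFinset, g.ω x y ≤ C := g.sum_ω_le hω x
  have hSw : ∑ y ∈ (g.locfin x).toFinset,
      g.ω x y * ((u y * h y - u y) - (u x * h x - u x)) * ((u y * h y - u y) - (u x * h x - u x))
      ≤ ∑ y ∈ (g.locfin x).toFinset,
        g.ω x y * (2 * ((u y - u x) * (u y - u x)) + 2 * (u x * u x)) := by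
    refine Finset.sum_le_sum fun y _ => ?_
    have hk := key_ineq (u y) (u x) (h y) (h x) (hh0 y) (hh1 y) (hh0 x) (hh1 x)
    have hωn := g.nonneg x y
    calc g.ω x y * ((u y * h y - u y) - (u x * h x - u x)) * ((u y * h y - u y) - (u x * h x - u x))
        = g.ω x y * (((u y * h y - u y) - (u x * h x - u x)) * ((u y * h y - u y) - (u x * h x - u x))) := mul_assoc _ _ _
      _ ≤ _ := mul_le_mul_of_nonneg_left hk hωn
  have hsplit : ∑ y ∈ (g.locfin x).toFinset,
      g.ω x y * (2 * ((u y - u x) * (u y - u x)) + 2 * (u x * u x))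
      = 2 * ∑ y ∈ (g.locfin x).toFinset, g.ω x y * (u y - u x) * (u y - u x)
        + 2 * (u x * u x) * ∑ y ∈ (g.locfin x).toFinset, g.ω x y := by
    rw [Finset.mul_sum, Finset.mul_sum, ← Finset.sum_add_distrib]
    exact Finset.sum_congr rfl fun y _ => by ring
  have hQ : (0:ℝ) ≤ 2 * (u x * u x) := by nlinarith [mul_self_nonneg (u x)]
  have := mul_le_mul_of_nonneg_left hW hQ
  linarith

lemma GraphData.Fdef_nonneg (g : GraphData V) (x₀ : V) (u : V → ℝ) (k : ℕ) (x : V) :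
    0 ≤ g.μ x * (g.grad (fun y => u y * g.cutoff x₀ k y - u y)
        (fun y => u y * g.cutoff x₀ k y - u y) x + (u x * g.cutoff x₀ k x - u x) ^ 2) :=
  mul_nonneg (g.μpos x).le (add_nonneg (g.grad_self_nonneg_s16 _ x) (sq_nonneg _))

lemma GraphData.Fdef_le (g : GraphData V) {μmin C : ℝ} (hμmin : 0 < μmin)
    (hμ : ∀ x, μmin ≤ g.μ x) (hω : ∀ x, ∑' y, g.ω x y ≤ C) (hC0 : 0 ≤ C)
    (x₀ : V) (u : V → ℝ) (k : ℕ) (x : V) :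
    g.μ x * (g.grad (fun y => u y * g.cutoff x₀ k y - u y)
        (fun y => u y * g.cutoff x₀ k y - u y) x + (u x * g.cutoff x₀ k x - u x) ^ 2)
      ≤ (3 + C / μmin) * (g.μ x * (g.grad u u x + (u x) ^ 2)) := by
  have hμx := g.μpos x
  have e1 := g.grad_cutoff_bound hω u (g.cutoff x₀ k) (g.cutoff_nonneg x₀ k)
    (g.cutoff_le_one x₀ k) x
  have hη0 := g.cutoff_nonneg x₀ k x
  have hη1 := g.cutoff_le_one x₀ k x
  have e2 : (u x * g.cutoff x₀ k x - u x) ^ 2 ≤ (u x) ^ 2 := by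
    nlinarith [mul_nonneg (mul_nonneg hη0 (by linarith : (0:ℝ) ≤ 2 - g.cutoff x₀ k x))
      (mul_self_nonneg (u x))]
  have e2' : g.μ x * (u x * g.cutoff x₀ k x - u x) ^ 2 ≤ g.μ x * (u x) ^ 2 :=
    mul_le_mul_of_nonneg_left e2 hμx.le
  have e3 : C * (u x * u x) ≤ C / μmin * (g.μ x * (u x) ^ 2) := by
    have h1 : C ≤ C / μmin * g.μ x := by
      rw [div_mul_eq_mul_div, le_div_iff₀ hμmin]
      exact mul_le_mul_of_nonneg_left (hμ x) hC0
    have h2 : (0:ℝ) ≤ u x * u x := mul_self_nonneg (u x)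
    nlinarith
  have e4 : 0 ≤ g.μ x * g.grad u u x := mul_nonneg hμx.le (g.grad_self_nonneg_s16 u x)
  have e5 : 0 ≤ g.μ x * (u x) ^ 2 := mul_nonneg hμx.le (sq_nonneg _)
  have e6 : 0 ≤ C / μmin := div_nonneg hC0 hμmin.le
  nlinarith [mul_nonneg e6 e4]

lemma GraphData.Fdef_vanish (g : GraphData V) (hconn : g.G.Connected) (x₀ : V)
    (u : V → ℝ) {k : ℕ} {x : V} (hk : g.G.dist x x₀ + 1 ≤ k) :
    g.μ x * (g.grad (fun y => u y * g.cutoff x₀ k y - u y)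
        (fun y => u y * g.cutoff x₀ k y - u y) x + (u x * g.cutoff x₀ k x - u x) ^ 2) = 0 := by
  have hx1 : g.cutoff x₀ k x = 1 := g.cutoff_eq_one x₀ k x (by omega)
  have hgrad : g.grad (fun y => u y * g.cutoff x₀ k y - u y)
      (fun y => u y * g.cutoff x₀ k y - u y) x = 0 := by
    unfold GraphData.grad
    have : ∀ y : V, g.ω x y * ((u y * g.cutoff x₀ k y - u y) - (u x * g.cutoff x₀ k x - u x))
        * ((u y * g.cutoff x₀ k y - u y) - (u x * g.cutoff x₀ k x - u x)) = 0 := by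
      intro y
      by_cases hωy : g.ω x y = 0
      · simp [hωy]
      · have hadj : g.G.Adj x y := lt_of_le_of_ne (g.nonneg x y) (Ne.symm hωy)
        have hdy : g.G.dist y x₀ ≤ k := by
          have ht := hconn.dist_triangle (u := y) (v := x) (w := x₀)
          have h1 : g.G.dist y x ≤ 1 := by
            have := SimpleGraph.dist_le hadj.symm.toWalk
            simpa using this
          omega
        have hy1 : g.cutoff x₀ k y = 1 := g.cutoff_eq_one x₀ k y hdy
        rw [hy1, hx1]; ring
    rw [tsum_congr this]
    simp
  rw [hgrad, hx1]
  ring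

/-- density of finitely supported functions in W^{1,2}(V) via cutoffs. -/
theorem stmt16 (g : GraphData V) (μmin C : ℝ) (hμmin : 0 < μmin)
    (hμ : ∀ x, μmin ≤ g.μ x) (hω : ∀ x, ∑' y, g.ω x y ≤ C)
    (hconn : g.G.Connected) (x₀ : V)
    (u : V → ℝ) (hu : Summable fun x => g.μ x * (g.grad u u x + (u x) ^ 2)) :
    (∀ ε > 0, ∃ v : V → ℝ, (Function.support v).Finite ∧
      (∑' x, g.μ x * (g.grad (fun y => u y - v y) (fun y => u y - v y) x
          + (u x - v x) ^ 2)) < ε)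
    ∧ (∀ k : ℕ, (Function.support fun x => u x * g.cutoff x₀ k x).Finite)
    ∧ Filter.Tendsto (fun k : ℕ => ∑' x, g.μ x *
        (g.grad (fun y => u y * g.cutoff x₀ k y - u y)
            (fun y => u y * g.cutoff x₀ k y - u y) x
          + (u x * g.cutoff x₀ k x - u x) ^ 2)) Filter.atTop (nhds 0) := by
  have hC0 : 0 ≤ C := le_trans (tsum_nonneg fun y => g.nonneg x₀ y) (hω x₀)
  -- part 2 : finite support of the cutoffs
  have h2 : ∀ k : ℕ, (Function.support fun x => u x * g.cutoff x₀ k x).Finite := by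
    intro k
    refine Set.Finite.subset (g.ball_finite hconn x₀ (2 * k)) ?_
    intro x hx
    simp only [Set.mem_setOf_eq]
    by_contra h
    push_neg at h
    exact hx (by simp only []; rw [g.cutoff_eq_zero x₀ k x h, mul_zero])
  -- part 3 : dominated convergence
  have h3 : Filter.Tendsto (fun k : ℕ => ∑' x, g.μ x *
      (g.grad (fun y => u y * g.cutoff x₀ k y - u y)
          (fun y => u y * g.cutoff x₀ k y - u y) x
        + (u x * g.cutoff x₀ k x - u x) ^ 2)) Filter.atTop (nhds 0) := by
    have hmain := tendsto_tsum_of_dominated_convergence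
      (𝓕 := (Filter.atTop : Filter ℕ))
      (f := fun k x => g.μ x * (g.grad (fun y => u y * g.cutoff x₀ k y - u y)
          (fun y => u y * g.cutoff x₀ k y - u y) x + (u x * g.cutoff x₀ k x - u x) ^ 2))
      (g := fun _ : V => (0:ℝ))
      (bound := fun x => (3 + C / μmin) * (g.μ x * (g.grad u u x + (u x) ^ 2)))
      (hu.mul_left _)
      (fun x => by
        refine tendsto_const_nhds.congr' ?_
        filter_upwards [Filter.eventually_ge_atTop (g.G.dist x x₀ + 1)] with k hk
        exact (g.Fdef_vanish hconn x₀ u hk).symm)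
      (Filter.Eventually.of_forall fun k x => by
        rw [Real.norm_of_nonneg (g.Fdef_nonneg x₀ u k x)]
        exact g.Fdef_le hμmin hμ hω hC0 x₀ u k x)
    simpa using hmain
  refine ⟨?_, h2, h3⟩
  -- part 1
  intro ε hε
  obtain ⟨k, hk⟩ := ((tendsto_order.1 h3).2 ε hε).exists
  refine ⟨fun y => u y * g.cutoff x₀ k y, h2 k, ?_⟩
  have heq : (∑' x, g.μ x * (g.grad (fun y => u y - u y * g.cutoff x₀ k y)
      (fun y => u y - u y * g.cutoff x₀ k y) x + (u x - u x * g.cutoff x₀ k x) ^ 2))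
      = ∑' x, g.μ x * (g.grad (fun y => u y * g.cutoff x₀ k y - u y)
          (fun y => u y * g.cutoff x₀ k y - u y) x + (u x * g.cutoff x₀ k x - u x) ^ 2) := by
    refine tsum_congr fun x => ?_
    have hg : g.grad (fun y => u y - u y * g.cutoff x₀ k y)
        (fun y => u y - u y * g.cutoff x₀ k y) x
        = g.grad (fun y => u y * g.cutoff x₀ k y - u y)
            (fun y => u y * g.cutoff x₀ k y - u y) x := by
      unfold GraphData.grad
      congr 1
      exact tsum_congr fun y => by ring
    rw [hg, show (u x - u x * g.cutoff x₀ k x) = -(u x * g.cutoff x₀ k x - u x) by ring, neg_sq]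
  exact lt_of_eq_of_lt heq hk
end
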